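/- The set {x^i · f_k(x,y) : i ≥ 0, k ≥ 0} is a ℤ-basis of the polynomial ring ℤ[x,y]. -/

import Mathlib

/-- Generalized Fibonacci polynomials in ℤ[x,y] (x = X 0, y = X 1):
f_0 = 1, f_1 = y, f_k = y·f_{k-1} - x·f_{k-2}. -/
noncomputable def f2 : ℕ → MvPolynomial (Fin 2) ℤ
  | 0 => 1
  | 1 => MvPolynomial.X 1
  | k + 2 => MvPolynomial.X 1 * f2 (k + 1) - MvPolynomial.X 0 * f2 k


open MvPolynomial

lemma f2_totalDegree : ∀ k, (f2 k).totalDegree ≤ k := by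
  have H : ∀ k, (f2 k).totalDegree ≤ k ∧ (f2 (k+1)).totalDegree ≤ k+1 := by
    intro k
    induction k with
    | zero => constructor <;> simp [f2, totalDegree_X]
    | succ n ih =>
      refine ⟨ih.2, ?_⟩
      show (MvPolynomial.X 1 * f2 (n+1) - MvPolynomial.X 0 * f2 n).totalDegree ≤ n+2
      refine (totalDegree_sub _ _).trans ?_
      refine max_le ?_ ?_
      · refine (totalDegree_mul _ _).trans ?_
        have := ih.2; simp only [totalDegree_X]; omega
      · exact (totalDegree_mul _ _).trans (by
          have := ih.1; simp only [totalDegree_X]; omega)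
  exact fun k => (H k).1

lemma f2_sub (k : ℕ) :
    f2 k - X 1 ^ k = 0 ∨ (f2 k - X 1 ^ k).totalDegree < k := by
  induction k using Nat.strong_induction_on with
  | _ k ih =>
    match k with
    | 0 => left; simp [f2]
    | 1 => left; simp [f2]
    | (n+2) =>
      right
      have key : f2 (n+2) - X 1 ^ (n+2)
          = X 1 * (f2 (n+1) - X 1 ^ (n+1)) - X 0 * f2 n := by
        show X 1 * f2 (n + 1) - X 0 * f2 n - X 1 ^ (n + 2) = _
        ring
      rw [key]
      refine lt_of_le_of_lt (totalDegree_sub _ _) ?_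
      refine max_lt ?_ ?_
      · rcases ih (n+1) (by omega) with h | h
        · simp [h]
        · refine lt_of_le_of_lt (totalDegree_mul _ _) ?_
          simp only [totalDegree_X]; omega
      · refine lt_of_le_of_lt (totalDegree_mul _ _) ?_
        have := f2_totalDegree n
        simp only [totalDegree_X]; omega

/-- The reindexing equivalence. -/
noncomputable def e2 : ℕ × ℕ ≃ (Fin 2 →₀ ℕ) :=
  (finTwoArrowEquiv ℕ).symm.trans Finsupp.equivFunOnFinite.symm

@[simp] lemma e2_apply_zero (p : ℕ × ℕ) : e2 p 0 = p.1 := by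
  simp [e2, finTwoArrowEquiv]

@[simp] lemma e2_apply_one (p : ℕ × ℕ) : e2 p 1 = p.2 := by
  simp [e2, finTwoArrowEquiv]

/-- monomial d 1 = X0^(d 0) * X1^(d 1) for d : Fin 2 →₀ ℕ. -/
lemma monomial_eq_pow (d : Fin 2 →₀ ℕ) :
    (monomial d (1 : ℤ)) = X 0 ^ (d 0) * X 1 ^ (d 1) := by
  have hd : d = Finsupp.single 0 (d 0) + Finsupp.single 1 (d 1) := by
    ext i
    fin_cases i <;> simp
  rw [X_pow_eq_monomial, X_pow_eq_monomial, monomial_mul, ← hd, mul_one]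

lemma degree_sum_fin2 (d : Fin 2 →₀ ℕ) : (d.sum fun _ e => e) = d 0 + d 1 := by
  rw [Finsupp.sum_fintype _ _ (fun _ => rfl)]
  simp [Fin.sum_univ_two]

/-- The linear map sending the monomial x^i y^k to x^i f_k. -/
noncomputable def φ : MvPolynomial (Fin 2) ℤ →ₗ[ℤ] MvPolynomial (Fin 2) ℤ :=
  (basisMonomials (Fin 2) ℤ).constr ℤ (fun d => X 0 ^ (d 0) * f2 (d 1))

lemma φ_monomial (d : Fin 2 →₀ ℕ) :
    φ (monomial d (1 : ℤ)) = X 0 ^ (d 0) * f2 (d 1) := by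
  have : (monomial d (1 : ℤ)) = basisMonomials (Fin 2) ℤ d := by
    rw [coe_basisMonomials]
  rw [this, φ, Module.Basis.constr_basis]

lemma φ_sub (p : MvPolynomial (Fin 2) ℤ) :
    φ p - p = 0 ∨ (φ p - p).totalDegree < p.totalDegree := by
  set N := p.totalDegree with hN
  have hrep : φ p - p = ∑ d ∈ p.support,
      coeff d p • (X 0 ^ (d 0) * (f2 (d 1) - X 1 ^ (d 1))) := by
    conv_lhs => rw [p.as_sum, map_sum]
    rw [← Finset.sum_sub_distrib]
    refine Finset.sum_congr rfl fun d _ => ?_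
    have h1 : (monomial d (coeff d p)) = coeff d p • monomial d (1 : ℤ) := by
      rw [smul_monomial, smul_eq_mul, mul_one]
    rw [h1, map_smul, φ_monomial, ← smul_sub, monomial_eq_pow, mul_sub]
  by_cases hz : ∀ d ∈ p.support,
      coeff d p • (X 0 ^ (d 0) * (f2 (d 1) - X 1 ^ (d 1))) = 0
  · left; rw [hrep]; exact Finset.sum_eq_zero hz
  · right
    push_neg at hz
    obtain ⟨d₀, hd₀, hd₀ne⟩ := hz
    -- each term is zero or has degree < N; moreover N > 0
    have hterm : ∀ d ∈ p.support,
        coeff d p • (X 0 ^ (d 0) * (f2 (d 1) - X 1 ^ (d 1))) = 0 ∨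
        (coeff d p • (X 0 ^ (d 0) * (f2 (d 1) - X 1 ^ (d 1)))).totalDegree
          < d 0 + d 1 := by
      intro d _
      rcases f2_sub (d 1) with h | h
      · left; simp [h]
      · right
        refine lt_of_le_of_lt (totalDegree_smul_le _ _) ?_
        refine lt_of_le_of_lt (totalDegree_mul _ _) ?_
        have : (X 0 ^ (d 0) : MvPolynomial (Fin 2) ℤ).totalDegree = d 0 :=
          totalDegree_X_pow _ _
        omega
    have hdeg : ∀ d ∈ p.support, d 0 + d 1 ≤ N := by
      intro d hd
      have := le_totalDegree hd
      rwa [degree_sum_fin2] at this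
    have hNpos : 0 < N := by
      rcases hterm d₀ hd₀ with h | h
      · exact absurd h hd₀ne
      · have := hdeg d₀ hd₀; omega
    rw [hrep]
    refine lt_of_le_of_lt (totalDegree_finset_sum _ _) ?_
    rw [Finset.sup_lt_iff (by simpa using hNpos)]
    intro d hd
    rcases hterm d hd with h | h
    · rw [h]; simpa using hNpos
    · exact lt_of_lt_of_le h (hdeg d hd)

lemma φ_injective : Function.Injective φ := by
  rw [injective_iff_map_eq_zero]
  intro p hp
  rcases φ_sub p with h | h
  · rw [hp, zero_sub, neg_eq_zero] at h; exact h
  · rw [hp, zero_sub, totalDegree_neg] at h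
    exact absurd h (lt_irrefl _)

lemma φ_surjective : Function.Surjective φ := by
  have key : ∀ n : ℕ, ∀ p : MvPolynomial (Fin 2) ℤ,
      p.totalDegree ≤ n → p ∈ LinearMap.range φ := by
    intro n
    induction n using Nat.strong_induction_on with
    | _ n ih =>
      intro p hp
      rw [p.as_sum]
      refine Submodule.sum_mem _ fun d hd => ?_
      set q := coeff d p • (X 0 ^ (d 0) * (f2 (d 1) - X 1 ^ (d 1))) with hq
      have hmono : (monomial d (coeff d p)) = φ (monomial d (coeff d p)) - q := by
        have h1 : (monomial d (coeff d p)) = coeff d p • monomial d (1 : ℤ) := by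
          rw [smul_monomial, smul_eq_mul, mul_one]
        rw [h1, map_smul, φ_monomial, hq, ← smul_sub]
        congr 1
        rw [monomial_eq_pow]
        ring
      rcases f2_sub (d 1) with h | h
      · have : q = 0 := by simp [hq, h]
        rw [hmono, this, sub_zero]
        exact LinearMap.mem_range_self _ _
      · have hqdeg : q.totalDegree < d 0 + d 1 := by
          refine lt_of_le_of_lt (totalDegree_smul_le _ _) ?_
          refine lt_of_le_of_lt (totalDegree_mul _ _) ?_
          have : (X 0 ^ (d 0) : MvPolynomial (Fin 2) ℤ).totalDegree = d 0 :=
            totalDegree_X_pow _ _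
          omega
        have hdn : d 0 + d 1 ≤ n := by
          have := le_totalDegree hd
          rw [degree_sum_fin2] at this
          omega
        have hqmem : q ∈ LinearMap.range φ :=
          ih q.totalDegree (by omega) q le_rfl
        rw [hmono]
        exact Submodule.sub_mem _ (LinearMap.mem_range_self _ _) hqmem
  intro p
  obtain ⟨q, hq⟩ := key p.totalDegree p le_rfl
  exact ⟨q, hq⟩

noncomputable def φe : MvPolynomial (Fin 2) ℤ ≃ₗ[ℤ] MvPolynomial (Fin 2) ℤ :=
  LinearEquiv.ofBijective φ ⟨φ_injective, φ_surjective⟩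

noncomputable def fBasis : Module.Basis (ℕ × ℕ) ℤ (MvPolynomial (Fin 2) ℤ) :=
  (((basisMonomials (Fin 2) ℤ).map φe).reindex e2.symm)

lemma fBasis_apply (p : ℕ × ℕ) :
    fBasis p = X 0 ^ p.1 * f2 p.2 := by
  rw [fBasis, Module.Basis.reindex_apply, Equiv.symm_symm, Module.Basis.map_apply]
  have : φe ((basisMonomials (Fin 2) ℤ) (e2 p)) = φ (monomial (e2 p) 1) := by
    rw [coe_basisMonomials]; rfl
  rw [this, φ_monomial, e2_apply_zero, e2_apply_one]


open MvPolynomial in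
theorem f2_family_basis :
    LinearIndependent ℤ (fun p : ℕ × ℕ => (X 0 : MvPolynomial (Fin 2) ℤ) ^ p.1 * f2 p.2) ∧
    Submodule.span ℤ
      (Set.range (fun p : ℕ × ℕ => (X 0 : MvPolynomial (Fin 2) ℤ) ^ p.1 * f2 p.2)) = ⊤ := by
  have hfun : (fun p : ℕ × ℕ => (X 0 : MvPolynomial (Fin 2) ℤ) ^ p.1 * f2 p.2) = ⇑fBasis := by
    funext p; rw [fBasis_apply]
  rw [hfun]
  exact ⟨fBasis.linearIndependent, fBasis.span_eq⟩
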